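/- Fix x ∈ P₁ and a pair (i,j) ∈ {(1,3), (1,4), (2,3), (2,4)}. Let (𝓛_x^{(2)})^{2,(i,j)-good} ⊆ 𝓛_x^{(2)} × 𝓛_x^{(2)} be the set of pairs ((L₁, y₁, y₂), (L₂, y₃, y₄)) for which y_i and y_j are distinct and Sp(y_i, y_j) ∈ 𝓛_{P₁}^f (where y₁, y₂ come from the first triple and y₃, y₄ from the second). Then ℘_{(𝓛_x^{(2)})²}((𝓛_x^{(2)})^{2,(i,j)-good}) ≥ 1 − (ε + (q−1)/(q^{n+1}−1)) · ((q^{n+1}−q)/(q^{n+1}−1))^{−2}. -/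

import Mathlib

open Projectivization

/-- A *line* in the projective space `ℙ K V`: the set of points represented by the nonzero
vectors of a `2`-dimensional subspace of `V`. -/
def IsLine (K : Type*) [DivisionRing K] {V : Type*} [AddCommGroup V] [Module K V]
    (L : Set (Projectivization K V)) : Prop :=
  ∃ W : Submodule K V, Module.finrank K W = 2 ∧ L = {p | p.submodule ≤ W}

/-- `Sp y y'`: the set of points whose representatives lie in the span of representatives of
`y` and `y'`.  For `y ≠ y'` this is the unique line through `y` and `y'`. -/
def Sp {K : Type*} [DivisionRing K] {V : Type*} [AddCommGroup V] [Module K V]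
    (y y' : Projectivization K V) : Set (Projectivization K V) :=
  {p | p.submodule ≤ y.submodule ⊔ y'.submodule}

/-- `℘_S(T) = #T / #S`, the proportion of a (finite) set `T` inside a (finite) set `S`. -/
noncomputable def ratio {α : Type*} (S T : Set α) : ℝ := (T.ncard : ℝ) / (S.ncard : ℝ)

/-- The quantity `A(q,n,ε)`. -/
noncomputable def Aqne (q n : ℕ) (ε : ℝ) : ℝ :=
  2 * (ε + ((q : ℝ) - 1) / ((q : ℝ) ^ (n + 1) - 1)) *
      ((((q : ℝ) ^ (n + 1) - q) / ((q : ℝ) ^ (n + 1) - 1)) ^ 2)⁻¹ +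
    ((q : ℝ) - 1) ^ 2 / ((q : ℝ) ^ (n + 1) - q)

/-- The quantity `B(q,n,ε)`. -/
noncomputable def Bqne (q n : ℕ) (ε : ℝ) : ℝ :=
  2 * ((q : ℝ) - 1) * (((q : ℝ) ^ (n + 1) - 1) / ((q : ℝ) ^ (n + 1) - q)) *
      (2 * ε + 2 * Aqne q n ε + 2 * (q : ℝ) ^ 2 * ((q : ℝ) + 1) ^ 2 / ((q : ℝ) ^ (n + 1) - q)) +
    2 * Aqne q n ε + 2 * (q : ℝ) ^ 2 * ((q : ℝ) + 1) ^ 2 / ((q : ℝ) ^ (n + 1) - q)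

/-- The set `𝓛ₓ⁽²⁾` of triples `(L, y₁, y₂)` where `L` is a line through `x` and `y₁, y₂` are
two distinct points of `L ∖ {x}`. -/
def L2 {K : Type*} [DivisionRing K] {V : Type*} [AddCommGroup V] [Module K V]
    (x : Projectivization K V) :
    Set (Set (Projectivization K V) × Projectivization K V × Projectivization K V) :=
  {t | IsLine K t.1 ∧ x ∈ t.1 ∧ t.2.1 ∈ t.1 ∧ t.2.2 ∈ t.1 ∧
    t.2.1 ≠ x ∧ t.2.2 ≠ x ∧ t.2.1 ≠ t.2.2}

/-- The set `𝓢 ⊆ (𝓛ₓ⁽²⁾)²` of pairs `((L₁,y₁,y₂),(L₂,y₃,y₄))` such that `y₁ ≠ y₃`, `y₂ ≠ y₄`,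
both `Sp(y₁,y₃)` and `Sp(y₂,y₄)` are lines whose image under `f` is a line, and the lines
`Sp(f y₁, f y₂)` and `Sp(f y₃, f y₄)` intersect in exactly one point. -/
def Sset {𝔽 : Type*} [Field 𝔽] {V₁ V₂ : Type*} [AddCommGroup V₁] [Module 𝔽 V₁]
    [AddCommGroup V₂] [Module 𝔽 V₂]
    (f : Projectivization 𝔽 V₁ → Projectivization 𝔽 V₂) (x : Projectivization 𝔽 V₁) :
    Set ((Set (Projectivization 𝔽 V₁) × Projectivization 𝔽 V₁ × Projectivization 𝔽 V₁) ×
      (Set (Projectivization 𝔽 V₁) × Projectivization 𝔽 V₁ × Projectivization 𝔽 V₁)) :=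
  {p | p.1 ∈ L2 x ∧ p.2 ∈ L2 x ∧ p.1.2.1 ≠ p.2.2.1 ∧ p.1.2.2 ≠ p.2.2.2 ∧
    IsLine 𝔽 (Sp p.1.2.1 p.2.2.1) ∧ IsLine 𝔽 (f '' Sp p.1.2.1 p.2.2.1) ∧
    IsLine 𝔽 (Sp p.1.2.2 p.2.2.2) ∧ IsLine 𝔽 (f '' Sp p.1.2.2 p.2.2.2) ∧
    ∃! z, z ∈ Sp (f p.1.2.1) (f p.1.2.2) ∩ Sp (f p.2.2.1) (f p.2.2.2)}

/-- The subset `𝓢_z ⊆ 𝓢` of pairs whose unique intersection point is `z`. -/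
def Sz {𝔽 : Type*} [Field 𝔽] {V₁ V₂ : Type*} [AddCommGroup V₁] [Module 𝔽 V₁]
    [AddCommGroup V₂] [Module 𝔽 V₂]
    (f : Projectivization 𝔽 V₁ → Projectivization 𝔽 V₂) (x : Projectivization 𝔽 V₁)
    (z : Projectivization 𝔽 V₂) :
    Set ((Set (Projectivization 𝔽 V₁) × Projectivization 𝔽 V₁ × Projectivization 𝔽 V₁) ×
      (Set (Projectivization 𝔽 V₁) × Projectivization 𝔽 V₁ × Projectivization 𝔽 V₁)) :=
  {p | p ∈ Sset f x ∧
    Sp (f p.1.2.1) (f p.1.2.2) ∩ Sp (f p.2.2.1) (f p.2.2.2) = {z}}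

open Module Set
open scoped LinearAlgebra.Projectivization

/-- For a fixed point `x` and a fixed pair `(i,j) ∈ {(1,3),(1,4),(2,3),(2,4)}`, the proportion
of pairs of marked lines through `x` whose `i`-th and `j`-th marked points are distinct and
span a line carried by `f` to a line is at least
`1 - (ε + (q-1)/(q^(n+1)-1)) · ((q^(n+1)-q)/(q^(n+1)-1))⁻²`. -/


lemma count_fibers {α β : Type*} [Finite α] [Finite β] (s : Set α) (t : Set β) (f : α → β) (k : ℕ)
    (hmaps : ∀ a ∈ s, f a ∈ t) (hfib : ∀ b ∈ t, {a | a ∈ s ∧ f a = b}.ncard = k) :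
    s.ncard = t.ncard * k := by
  classical
  haveI := Fintype.ofFinite α; haveI := Fintype.ofFinite β
  rw [Set.ncard_eq_toFinset_card' s, Set.ncard_eq_toFinset_card' t]
  rw [Finset.card_eq_sum_card_fiberwise (f := f) (t := t.toFinset)
    (fun x hx => by rw [Finset.mem_coe, Set.mem_toFinset] at hx ⊢; exact hmaps x hx)]
  rw [Finset.sum_congr rfl (fun b hb => ?_), Finset.sum_const, smul_eq_mul]
  have h := hfib b (by simpa [Set.mem_toFinset] using hb)
  rw [← h, Set.ncard_eq_toFinset_card' {a | a ∈ s ∧ f a = b}]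
  congr 1; ext a; simp [Set.mem_toFinset]

lemma count_fibers_le {α β : Type*} [Finite α] [Finite β] (s : Set α) (t : Set β) (f : α → β)
    (k : ℕ) (hmaps : ∀ a ∈ s, f a ∈ t) (hfib : ∀ b ∈ t, {a | a ∈ s ∧ f a = b}.ncard ≤ k) :
    s.ncard ≤ t.ncard * k := by
  classical
  haveI := Fintype.ofFinite α; haveI := Fintype.ofFinite β
  rw [Set.ncard_eq_toFinset_card' s, Set.ncard_eq_toFinset_card' t]
  rw [Finset.card_eq_sum_card_fiberwise (f := f) (t := t.toFinset)
    (fun x hx => by rw [Finset.mem_coe, Set.mem_toFinset] at hx ⊢; exact hmaps x hx)]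
  calc ∑ b ∈ t.toFinset, (s.toFinset.filter (fun a => f a = b)).card
      ≤ ∑ _b ∈ t.toFinset, k := by
        refine Finset.sum_le_sum (fun b hb => ?_)
        have h := hfib b (by simpa [Set.mem_toFinset] using hb)
        refine le_trans (le_of_eq ?_) h
        rw [Set.ncard_eq_toFinset_card' {a | a ∈ s ∧ f a = b}]
        congr 1; ext a; simp [Set.mem_toFinset]
    _ = t.toFinset.card * k := by rw [Finset.sum_const, smul_eq_mul]

lemma ncard_prod_set {α β : Type*} (s : Set α) (t : Set β) :
    (s ×ˢ t).ncard = s.ncard * t.ncard := by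
  rw [← Nat.card_coe_set_eq, ← Nat.card_coe_set_eq, ← Nat.card_coe_set_eq,
    ← Nat.card_prod]
  exact Nat.card_congr (Equiv.Set.prod s t)

lemma ncard_offdiag {α : Type*} [Finite α] (s : Set α) :
    {p : α × α | p.1 ∈ s ∧ p.2 ∈ s ∧ p.1 ≠ p.2}.ncard = s.ncard * (s.ncard - 1) := by
  refine count_fibers _ s Prod.fst (s.ncard - 1) (fun a ha => ha.1) (fun b hb => ?_)
  have hset : {a | a ∈ {p : α × α | p.1 ∈ s ∧ p.2 ∈ s ∧ p.1 ≠ p.2} ∧ a.1 = b}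
      = (fun z => (b, z)) '' (s \ {b}) := by
    ext ⟨a1, a2⟩
    constructor
    · rintro ⟨⟨h1, h2, h3⟩, rfl⟩
      exact ⟨a2, ⟨h2, fun h => h3 (Set.mem_singleton_iff.1 h).symm⟩, rfl⟩
    · rintro ⟨z, ⟨hz, hz2⟩, h⟩
      cases h
      exact ⟨⟨hb, hz, fun h => hz2 (Set.mem_singleton_iff.2 h.symm)⟩, rfl⟩
  rw [hset, Set.ncard_image_of_injective _ (fun u v h => by simpa using h),
    Set.ncard_diff (by simpa using hb), Set.ncard_singleton]

section ProjCard

variable (K : Type*) [Field K] (V : Type*) [AddCommGroup V] [Module K V]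

lemma exists_unit_smul_rep {K : Type*} [Field K] {V : Type*} [AddCommGroup V] [Module K V]
    (v : V) (hv : v ≠ 0) :
    ∃ a : Kˣ, (a : K) • (Projectivization.mk K v hv).rep = v := by
  obtain ⟨a, ha⟩ := Projectivization.exists_smul_eq_mk_rep K v hv
  exact ⟨a⁻¹, by rw [← ha]; simp [Units.smul_def, smul_smul]⟩

lemma proj_bij : Function.Bijective
    (fun pa : ℙ K V × Kˣ => (⟨(pa.2 : K) • pa.1.rep,
      smul_ne_zero pa.2.ne_zero (rep_nonzero _)⟩ : {v : V // v ≠ 0})) := by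
  constructor
  · rintro ⟨p, a⟩ ⟨q, b⟩ h
    simp only [Subtype.mk.injEq] at h
    have hpq : p = q := by
      have h1 : Projectivization.mk K ((a : K) • p.rep)
          (smul_ne_zero a.ne_zero (rep_nonzero _)) = p := by
        have := (Projectivization.mk_eq_mk_iff K ((a : K) • p.rep) p.rep
          (smul_ne_zero a.ne_zero (rep_nonzero _)) p.rep_nonzero).2
          ⟨a, Units.smul_def a p.rep⟩
        rw [this, p.mk_rep]
      have h2 : Projectivization.mk K ((b : K) • q.rep)
          (smul_ne_zero b.ne_zero (rep_nonzero _)) = q := by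
        have := (Projectivization.mk_eq_mk_iff K ((b : K) • q.rep) q.rep
          (smul_ne_zero b.ne_zero (rep_nonzero _)) q.rep_nonzero).2
          ⟨b, Units.smul_def b q.rep⟩
        rw [this, q.mk_rep]
      rw [← h1, ← h2]
      congr 1
    subst hpq
    have hab : (a : K) = b := smul_left_injective K (rep_nonzero p) h
    exact Prod.ext rfl (Units.ext hab)
  · rintro ⟨v, hv⟩
    obtain ⟨a, ha⟩ := exists_unit_smul_rep (K := K) v hv
    exact ⟨(Projectivization.mk K v hv, a), Subtype.ext ha⟩

lemma card_proj_mul [Fintype K] [Finite V] :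
    Nat.card (ℙ K V) * (Fintype.card K - 1) + 1 = Nat.card V := by
  have e : Nat.card (ℙ K V × Kˣ) = Nat.card {v : V // v ≠ 0} :=
    Nat.card_eq_of_bijective _ (proj_bij K V)
  rw [Nat.card_prod] at e
  have : DecidableEq K := Classical.decEq K
  have hu : Nat.card Kˣ = Fintype.card K - 1 := by
    rw [Nat.card_eq_fintype_card, Fintype.card_units]
  have hv : Nat.card {v : V // v ≠ 0} = Nat.card V - 1 := by
    have h1 : Nat.card {v : V // v ≠ 0} = ({v : V | v ≠ 0} : Set V).ncard :=
      Nat.card_coe_set_eq _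
    have h2 : ({v : V | v ≠ 0} : Set V) = Set.univ \ {0} := by
      ext v; simp
    rw [h1, h2, Set.ncard_diff (Set.subset_univ _), Set.ncard_univ, Set.ncard_singleton]
  have hpos : 0 < Nat.card V := Nat.card_pos
  rw [hu, hv] at e
  omega

lemma card_proj_formula [Fintype K] [FiniteDimensional K V] :
    Nat.card (ℙ K V) * (Fintype.card K - 1) + 1 = Fintype.card K ^ Module.finrank K V := by
  haveI : Finite V := Module.finite_of_finite K
  haveI : Fintype V := Fintype.ofFinite V
  rw [card_proj_mul, Nat.card_eq_fintype_card, card_eq_pow_finrank (K := K) (V := V)]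

end ProjCard

section Geometry

variable {K : Type*} [Field K] {V : Type*} [AddCommGroup V] [Module K V]

lemma mem_Sp_left (y y' : ℙ K V) : y ∈ Sp y y' := by
  simp only [Sp, Set.mem_setOf_eq]; exact le_sup_left

lemma mem_Sp_right (y y' : ℙ K V) : y' ∈ Sp y y' := by
  simp only [Sp, Set.mem_setOf_eq]; exact le_sup_right

lemma finrank_sup_eq_two {y y' : ℙ K V} (h : y ≠ y') :
    Module.finrank K (y.submodule ⊔ y'.submodule : Submodule K V) = 2 := by
  have hne : y.submodule ≠ y'.submodule := fun he => h (submodule_injective he)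
  have hlt : y.submodule ⊓ y'.submodule < y.submodule := by
    refine lt_of_le_of_ne inf_le_left (fun he => hne ?_)
    have h1 : y.submodule ≤ y'.submodule := he ▸ inf_le_right
    exact Submodule.eq_of_le_of_finrank_le h1
      (by rw [finrank_submodule, finrank_submodule])
  have hinf : Module.finrank K (y.submodule ⊓ y'.submodule : Submodule K V) = 0 := by
    have := Submodule.finrank_lt_finrank_of_lt hlt
    rw [finrank_submodule] at this
    omega
  have hsum := Submodule.finrank_sup_add_finrank_inf_eq y.submodule y'.submodule
  rw [finrank_submodule, finrank_submodule, hinf] at hsum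
  omega

lemma isLine_Sp {y y' : ℙ K V} (h : y ≠ y') : IsLine K (Sp y y') :=
  ⟨y.submodule ⊔ y'.submodule, finrank_sup_eq_two h, rfl⟩

lemma line_eq_Sp {L : Set (ℙ K V)} (hL : IsLine K L) {y y' : ℙ K V}
    (hy : y ∈ L) (hy' : y' ∈ L) (hne : y ≠ y') : L = Sp y y' := by
  obtain ⟨W, hW2, rfl⟩ := hL
  haveI : FiniteDimensional K W := FiniteDimensional.of_finrank_pos (by omega)
  have hsub : y.submodule ⊔ y'.submodule ≤ W := sup_le hy hy'
  have heq : y.submodule ⊔ y'.submodule = W :=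
    Submodule.eq_of_le_of_finrank_le hsub (by rw [hW2, finrank_sup_eq_two hne])
  ext p
  simp only [Sp, Set.mem_setOf_eq, heq]

lemma ncard_line {K : Type*} [Field K] [Fintype K] {V : Type*} [AddCommGroup V] [Module K V]
    [FiniteDimensional K V] {L : Set (ℙ K V)} (hL : IsLine K L) :
    L.ncard = Fintype.card K + 1 := by
  obtain ⟨W, hW2, rfl⟩ := hL
  haveI : Finite V := Module.finite_of_finite K
  have hrange : {p : ℙ K V | p.submodule ≤ W}
      = Set.range (Projectivization.map W.subtype (Submodule.injective_subtype W)) := by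
    ext p
    constructor
    · intro hp
      induction p using Projectivization.ind with
      | h v hv =>
        rw [Set.mem_setOf_eq, submodule_mk, Submodule.span_singleton_le_iff_mem] at hp
        refine ⟨Projectivization.mk K (⟨v, hp⟩ : W)
          (fun h => hv (congrArg Subtype.val h)), ?_⟩
        rw [Projectivization.map_mk]
        rfl
    · rintro ⟨w, rfl⟩
      induction w using Projectivization.ind with
      | h u hu =>
        rw [Projectivization.map_mk]
        rw [Set.mem_setOf_eq, submodule_mk, Submodule.span_singleton_le_iff_mem]
        exact u.2
  rw [hrange, ← Nat.card_coe_set_eq]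
  have hcr : Nat.card (Set.range (Projectivization.map W.subtype
      (Submodule.injective_subtype W))) = Nat.card (ℙ K W) :=
    Nat.card_range_of_injective (Projectivization.map_injective W.subtype
      (Submodule.injective_subtype W))
  rw [hcr]
  haveI : FiniteDimensional K W := FiniteDimensional.of_finrank_pos (by omega)
  have hform := card_proj_formula K W
  rw [hW2] at hform
  have hq : 2 ≤ Fintype.card K := Fintype.one_lt_card
  set M := Nat.card (ℙ K W) with hMdef
  have key : ∀ m : ℕ, 2 ≤ m → (m + 1) * (m - 1) + 1 = m ^ 2 := by
    intro m hm
    obtain ⟨k, rfl⟩ := Nat.exists_eq_add_of_le hm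
    have h2 : 2 + k - 1 = k + 1 := by omega
    rw [h2]; ring
  have key2 := key (Fintype.card K) hq
  have hM : M * (Fintype.card K - 1) = (Fintype.card K + 1) * (Fintype.card K - 1) := by omega
  exact Nat.eq_of_mul_eq_mul_right (by omega) hM

end Geometry

section Fibers

variable {K : Type*} [Field K] {V : Type*} [AddCommGroup V] [Module K V]

lemma fiber1_eq (x y : ℙ K V) (hxy : y ≠ x) :
    {t | t ∈ L2 x ∧ t.2.1 = y} = (fun z => (Sp x y, y, z)) '' (Sp x y \ {x, y}) := by
  ext ⟨L, a, b⟩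
  constructor
  · rintro ⟨⟨hL, hxL, haL, hbL, hax, hbx, hab⟩, rfl⟩
    have hLS : L = Sp x a := line_eq_Sp hL hxL haL (Ne.symm hax)
    refine ⟨b, ⟨hLS ▸ hbL, ?_⟩, by rw [hLS]⟩
    simp only [Set.mem_insert_iff, Set.mem_singleton_iff]
    push_neg
    exact ⟨hbx, fun h => hab h.symm⟩
  · rintro ⟨z, ⟨hz, hz2⟩, h⟩
    simp only [Set.mem_insert_iff, Set.mem_singleton_iff] at hz2
    push_neg at hz2
    cases h
    exact ⟨⟨isLine_Sp (Ne.symm hxy), mem_Sp_left x y, mem_Sp_right x y, hz,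
      hxy, hz2.1, fun h => hz2.2 h.symm⟩, rfl⟩

lemma fiber2_eq (x y : ℙ K V) (hxy : y ≠ x) :
    {t | t ∈ L2 x ∧ t.2.2 = y} = (fun z => (Sp x y, z, y)) '' (Sp x y \ {x, y}) := by
  ext ⟨L, a, b⟩
  constructor
  · rintro ⟨⟨hL, hxL, haL, hbL, hax, hbx, hab⟩, rfl⟩
    have hLS : L = Sp x b := line_eq_Sp hL hxL hbL (Ne.symm hbx)
    refine ⟨a, ⟨hLS ▸ haL, ?_⟩, by rw [hLS]⟩
    simp only [Set.mem_insert_iff, Set.mem_singleton_iff]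
    push_neg
    exact ⟨hax, hab⟩
  · rintro ⟨z, ⟨hz, hz2⟩, h⟩
    simp only [Set.mem_insert_iff, Set.mem_singleton_iff] at hz2
    push_neg at hz2
    cases h
    exact ⟨⟨isLine_Sp (Ne.symm hxy), mem_Sp_left x y, hz, mem_Sp_right x y,
      hz2.1, hxy, hz2.2⟩, rfl⟩

lemma ncard_fiber_aux [Fintype K] [FiniteDimensional K V] {x y : ℙ K V} (hxy : y ≠ x) :
    (Sp x y \ {x, y} : Set (ℙ K V)).ncard = Fintype.card K - 1 := by
  haveI : Finite V := Module.finite_of_finite K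
  haveI : Finite (ℙ K V) := Quotient.finite _
  have hsub : ({x, y} : Set (ℙ K V)) ⊆ Sp x y := by
    rintro p (rfl | rfl)
    · exact mem_Sp_left _ _
    · exact mem_Sp_right _ _
  rw [Set.ncard_diff hsub (Set.toFinite _), ncard_line (isLine_Sp (Ne.symm hxy)),
    Set.ncard_pair (Ne.symm hxy)]
  have : 2 ≤ Fintype.card K := Fintype.one_lt_card
  omega

lemma ncard_fiber1 [Fintype K] [FiniteDimensional K V] (x y : ℙ K V) (hxy : y ≠ x) :
    {t | t ∈ L2 x ∧ t.2.1 = y}.ncard = Fintype.card K - 1 := by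
  rw [fiber1_eq x y hxy,
    Set.ncard_image_of_injective _ (fun u v h => by simpa using h)]
  exact ncard_fiber_aux hxy

lemma ncard_fiber2 [Fintype K] [FiniteDimensional K V] (x y : ℙ K V) (hxy : y ≠ x) :
    {t | t ∈ L2 x ∧ t.2.2 = y}.ncard = Fintype.card K - 1 := by
  rw [fiber2_eq x y hxy,
    Set.ncard_image_of_injective _ (fun u v h => by simpa using h)]
  exact ncard_fiber_aux hxy

end Fibers

set_option maxHeartbeats 2000000 in
lemma main_aux {𝔽 : Type*} [Field 𝔽] [Fintype 𝔽] (q : ℕ) (hq : Fintype.card 𝔽 = q)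
    {V₁ V₂ : Type*} [AddCommGroup V₁] [Module 𝔽 V₁] [AddCommGroup V₂] [Module 𝔽 V₂]
    (n : ℕ) (hn : 3 < n) (hV₁ : Module.finrank 𝔽 V₁ = n + 1)
    (f : ℙ 𝔽 V₁ → ℙ 𝔽 V₂) (ε : ℝ) (hε : 0 < ε)
    (hlines : 1 - ε ≤ ratio {L | IsLine 𝔽 L} {L | IsLine 𝔽 L ∧ IsLine 𝔽 (f '' L)})
    (x : ℙ 𝔽 V₁)
    (g₁ g₂ : Set (ℙ 𝔽 V₁) × ℙ 𝔽 V₁ × ℙ 𝔽 V₁ → ℙ 𝔽 V₁)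
    (hgx₁ : ∀ t ∈ L2 x, g₁ t ≠ x) (hgx₂ : ∀ t ∈ L2 x, g₂ t ≠ x)
    (hfib₁ : ∀ y : ℙ 𝔽 V₁, y ≠ x → {t | t ∈ L2 x ∧ g₁ t = y}.ncard = q - 1)
    (hfib₂ : ∀ y : ℙ 𝔽 V₁, y ≠ x → {t | t ∈ L2 x ∧ g₂ t = y}.ncard = q - 1) :
    1 - (ε + ((q : ℝ) - 1) / ((q : ℝ) ^ (n + 1) - 1)) *
        ((((q : ℝ) ^ (n + 1) - q) / ((q : ℝ) ^ (n + 1) - 1)) ^ 2)⁻¹ ≤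
      ratio (L2 x ×ˢ L2 x)
        {p | p.1 ∈ L2 x ∧ p.2 ∈ L2 x ∧ g₁ p.1 ≠ g₂ p.2 ∧
          IsLine 𝔽 (Sp (g₁ p.1) (g₂ p.2)) ∧ IsLine 𝔽 (f '' Sp (g₁ p.1) (g₂ p.2))} := by
  classical
  haveI : FiniteDimensional 𝔽 V₁ := FiniteDimensional.of_finrank_pos (by omega)
  haveI : Finite V₁ := Module.finite_of_finite 𝔽
  haveI hPfin : Finite (ℙ 𝔽 V₁) := Quotient.finite _
  have hq2 : 2 ≤ q := hq ▸ Fintype.one_lt_card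
  set N := Nat.card (ℙ 𝔽 V₁) with hNdef
  have hN : N * (q - 1) + 1 = q ^ (n + 1) := by
    have h := card_proj_formula 𝔽 V₁
    rw [hV₁, hq] at h
    exact h
  -- N ≥ 2
  have hN2 : 2 ≤ N := by
    by_contra h
    push_neg at h
    have h1 : N * (q - 1) ≤ 1 * (q - 1) := Nat.mul_le_mul_right _ (by omega)
    have h2 : q ^ (n + 1) ≤ q := by omega
    have h3 : q * q ≤ q ^ (n + 1) := by
      calc q * q = q ^ 2 := (sq q).symm
        _ ≤ q ^ (n + 1) := Nat.pow_le_pow_right (by omega) (by omega)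
    have h4 : q * q ≤ q * 1 := by omega
    have h5 := Nat.le_of_mul_le_mul_left h4 (by omega)
    omega
  -- line sets
  set Lset : Set (Set (ℙ 𝔽 V₁)) := {L | IsLine 𝔽 L} with hLsetdef
  set Gset : Set (Set (ℙ 𝔽 V₁)) := {L | IsLine 𝔽 L ∧ IsLine 𝔽 (f '' L)} with hGsetdef
  have hGL : Gset ⊆ Lset := fun L hL => hL.1
  -- counting all lines
  have hfibL : ∀ L ∈ Lset, {a : ℙ 𝔽 V₁ × ℙ 𝔽 V₁ |
      a ∈ {p : ℙ 𝔽 V₁ × ℙ 𝔽 V₁ | p.1 ∈ Set.univ ∧ p.2 ∈ Set.univ ∧ p.1 ≠ p.2} ∧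
        Sp a.1 a.2 = L}.ncard = (q + 1) * q := by
    intro L hL
    have hset : {a : ℙ 𝔽 V₁ × ℙ 𝔽 V₁ |
        a ∈ {p : ℙ 𝔽 V₁ × ℙ 𝔽 V₁ | p.1 ∈ Set.univ ∧ p.2 ∈ Set.univ ∧ p.1 ≠ p.2} ∧
          Sp a.1 a.2 = L} = {p : ℙ 𝔽 V₁ × ℙ 𝔽 V₁ | p.1 ∈ L ∧ p.2 ∈ L ∧ p.1 ≠ p.2} := by
      ext ⟨a, b⟩
      constructor
      · rintro ⟨⟨-, -, hne⟩, hSp⟩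
        exact ⟨hSp ▸ mem_Sp_left a b, hSp ▸ mem_Sp_right a b, hne⟩
      · rintro ⟨h1, h2, hne⟩
        exact ⟨⟨trivial, trivial, hne⟩, (line_eq_Sp hL h1 h2 hne).symm⟩
    rw [hset, ncard_offdiag L, ncard_line hL, hq, Nat.add_sub_cancel]
  have hLq : {p : ℙ 𝔽 V₁ × ℙ 𝔽 V₁ | p.1 ∈ Set.univ ∧ p.2 ∈ Set.univ ∧ p.1 ≠ p.2}.ncard
      = Lset.ncard * ((q + 1) * q) :=
    count_fibers (α := ℙ 𝔽 V₁ × ℙ 𝔽 V₁) (β := Set (ℙ 𝔽 V₁)) _ Lset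
      (fun p => Sp p.1 p.2) ((q + 1) * q)
      (fun p hp => isLine_Sp hp.2.2) hfibL
  have hODuniv : {p : ℙ 𝔽 V₁ × ℙ 𝔽 V₁ | p.1 ∈ Set.univ ∧ p.2 ∈ Set.univ ∧ p.1 ≠ p.2}.ncard
      = N * (N - 1) := by
    rw [ncard_offdiag, Set.ncard_univ]
  have hLN : Lset.ncard * ((q + 1) * q) = N * (N - 1) := by rw [← hLq, hODuniv]
  -- bad lines
  have hbadlines : (((Lset \ Gset).ncard : ℝ)) ≤ ε * Lset.ncard := by
    by_cases hL0 : Lset.ncard = 0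
    · have hLe : Lset = ∅ := (Set.ncard_eq_zero (Set.toFinite _)).1 hL0
      have : Lset \ Gset = ∅ := by rw [hLe]; simp
      rw [this, hL0]
      simp
    · have hpos : (0 : ℝ) < Lset.ncard := by positivity
      have hGle : Gset.ncard ≤ Lset.ncard := Set.ncard_le_ncard hGL (Set.toFinite _)
      have hratio : (1 - ε) * Lset.ncard ≤ Gset.ncard := by
        have := hlines
        rw [ratio] at this
        calc (1 - ε) * Lset.ncard ≤ ((Gset.ncard : ℝ) / Lset.ncard) * Lset.ncard := by
              apply mul_le_mul_of_nonneg_right this hpos.le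
          _ = Gset.ncard := by field_simp
      rw [Set.ncard_diff hGL (Set.toFinite _), Nat.cast_sub hGle]
      nlinarith
  -- bad pairs
  set BadP : Set (ℙ 𝔽 V₁ × ℙ 𝔽 V₁) :=
    {p | p.1 ≠ p.2 ∧ ¬ IsLine 𝔽 (f '' Sp p.1 p.2)} with hBadPdef
  have hBadP : BadP.ncard ≤ (Lset \ Gset).ncard * ((q + 1) * q) := by
    refine count_fibers_le (α := ℙ 𝔽 V₁ × ℙ 𝔽 V₁) (β := Set (ℙ 𝔽 V₁)) _ _
      (fun p => Sp p.1 p.2) _ (fun p hp => ?_) (fun L hL => ?_)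
    · exact ⟨isLine_Sp hp.1, fun hG => hp.2 hG.2⟩
    · have hsub : {a | a ∈ BadP ∧ Sp a.1 a.2 = L}
          ⊆ {p : ℙ 𝔽 V₁ × ℙ 𝔽 V₁ | p.1 ∈ L ∧ p.2 ∈ L ∧ p.1 ≠ p.2} := by
        rintro ⟨a, b⟩ ⟨⟨hne, -⟩, hSp⟩
        exact ⟨hSp ▸ mem_Sp_left a b, hSp ▸ mem_Sp_right a b, hne⟩
      calc {a | a ∈ BadP ∧ Sp a.1 a.2 = L}.ncard
          ≤ {p : ℙ 𝔽 V₁ × ℙ 𝔽 V₁ | p.1 ∈ L ∧ p.2 ∈ L ∧ p.1 ≠ p.2}.ncard :=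
            Set.ncard_le_ncard hsub (Set.toFinite _)
        _ = L.ncard * (L.ncard - 1) := ncard_offdiag L
        _ = (q + 1) * q := by rw [ncard_line hL.1, hq, Nat.add_sub_cancel]
  -- L2 count
  have hL2card : (L2 x).ncard = (N - 1) * (q - 1) := by
    have := count_fibers (α := Set (ℙ 𝔽 V₁) × ℙ 𝔽 V₁ × ℙ 𝔽 V₁) (β := ℙ 𝔽 V₁)
      (L2 x) {y : ℙ 𝔽 V₁ | y ≠ x} g₁ (q - 1) hgx₁ (fun y hy => hfib₁ y hy)
    rw [this]
    congr 1
    have : {y : ℙ 𝔽 V₁ | y ≠ x} = Set.univ \ {x} := by ext y; simp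
    rw [this, Set.ncard_diff (Set.subset_univ _), Set.ncard_univ, Set.ncard_singleton]
  -- product and target sets
  set T : Set ((Set (ℙ 𝔽 V₁) × ℙ 𝔽 V₁ × ℙ 𝔽 V₁) × (Set (ℙ 𝔽 V₁) × ℙ 𝔽 V₁ × ℙ 𝔽 V₁)) :=
    {p | p.1 ∈ L2 x ∧ p.2 ∈ L2 x ∧ g₁ p.1 ≠ g₂ p.2 ∧
      IsLine 𝔽 (Sp (g₁ p.1) (g₂ p.2)) ∧ IsLine 𝔽 (f '' Sp (g₁ p.1) (g₂ p.2))} with hTdef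
  set B := (L2 x ×ˢ L2 x) \ T with hBdef
  have hTsub : T ⊆ L2 x ×ˢ L2 x := fun p hp => Set.mem_prod.2 ⟨hp.1, hp.2.1⟩
  have hprodcard : (L2 x ×ˢ L2 x).ncard = ((N - 1) * (q - 1)) * ((N - 1) * (q - 1)) := by
    rw [ncard_prod_set, hL2card]
  -- the exceptional pair set D
  set D : Set (ℙ 𝔽 V₁ × ℙ 𝔽 V₁) :=
    {yz | yz.1 ≠ x ∧ yz.2 ≠ x ∧ (yz.1 = yz.2 ∨ ¬ IsLine 𝔽 (f '' Sp yz.1 yz.2))} with hDdef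
  have hBD : B.ncard ≤ D.ncard * ((q - 1) * (q - 1)) := by
    refine count_fibers_le
      (α := (Set (ℙ 𝔽 V₁) × ℙ 𝔽 V₁ × ℙ 𝔽 V₁) × (Set (ℙ 𝔽 V₁) × ℙ 𝔽 V₁ × ℙ 𝔽 V₁))
      (β := ℙ 𝔽 V₁ × ℙ 𝔽 V₁) B D (fun p => (g₁ p.1, g₂ p.2)) _
      (fun p hp => ?_) (fun b hb => ?_)
    · obtain ⟨hp1, hp2⟩ := Set.mem_prod.1 hp.1
      refine ⟨hgx₁ _ hp1, hgx₂ _ hp2, ?_⟩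
      by_cases heq : g₁ p.1 = g₂ p.2
      · exact Or.inl heq
      · refine Or.inr (fun hfl => hp.2 ?_)
        exact ⟨hp1, hp2, heq, isLine_Sp heq, hfl⟩
    · have hsub : {a | a ∈ B ∧ (g₁ a.1, g₂ a.2) = b}
          ⊆ {t | t ∈ L2 x ∧ g₁ t = b.1} ×ˢ {t | t ∈ L2 x ∧ g₂ t = b.2} := by
        rintro p ⟨hpB, hpb⟩
        obtain ⟨hp1, hp2⟩ := Set.mem_prod.1 hpB.1
        exact Set.mem_prod.2 ⟨⟨hp1, congrArg Prod.fst hpb⟩, ⟨hp2, congrArg Prod.snd hpb⟩⟩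
      calc {a | a ∈ B ∧ (g₁ a.1, g₂ a.2) = b}.ncard
          ≤ ({t | t ∈ L2 x ∧ g₁ t = b.1} ×ˢ {t | t ∈ L2 x ∧ g₂ t = b.2}).ncard :=
            Set.ncard_le_ncard hsub (Set.toFinite _)
        _ = (q - 1) * (q - 1) := by
            rw [ncard_prod_set, hfib₁ b.1 hb.1, hfib₂ b.2 hb.2.1]
  -- bound on D
  have hdiag : ({p : ℙ 𝔽 V₁ × ℙ 𝔽 V₁ | p.1 = p.2}).ncard = N := by
    have hrange : {p : ℙ 𝔽 V₁ × ℙ 𝔽 V₁ | p.1 = p.2}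
        = Set.range (fun y : ℙ 𝔽 V₁ => (y, y)) := by
      ext ⟨a, b⟩
      simp only [Set.mem_setOf_eq, Set.mem_range, Prod.mk.injEq]
      constructor
      · rintro rfl; exact ⟨a, rfl, rfl⟩
      · rintro ⟨y, rfl, rfl⟩; rfl
    rw [hrange, ← Nat.card_coe_set_eq,
      Nat.card_range_of_injective (f := fun y : ℙ 𝔽 V₁ => (y, y))
        (fun a b h => (Prod.mk.injEq _ _ _ _ ▸ h : _ ∧ _).1)]
  have hDsub : D ⊆ {p : ℙ 𝔽 V₁ × ℙ 𝔽 V₁ | p.1 = p.2} ∪ BadP := by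
    rintro ⟨a, b⟩ ⟨ha, hb, hor⟩
    by_cases heq : a = b
    · exact Or.inl heq
    · exact Or.inr ⟨heq, hor.resolve_left heq⟩
  have hDcard : (D.ncard : ℝ) ≤ N + ε * (N * (N - 1) : ℕ) := by
    have h1 : D.ncard ≤ N + BadP.ncard := by
      calc D.ncard ≤ ({p : ℙ 𝔽 V₁ × ℙ 𝔽 V₁ | p.1 = p.2} ∪ BadP).ncard :=
            Set.ncard_le_ncard hDsub (Set.toFinite _)
        _ ≤ ({p : ℙ 𝔽 V₁ × ℙ 𝔽 V₁ | p.1 = p.2}).ncard + BadP.ncard :=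
            Set.ncard_union_le _ _
        _ = N + BadP.ncard := by rw [hdiag]
    have h2 : (BadP.ncard : ℝ) ≤ ε * (N * (N - 1) : ℕ) := by
      calc (BadP.ncard : ℝ) ≤ ((Lset \ Gset).ncard * ((q + 1) * q) : ℕ) := by
            exact_mod_cast hBadP
        _ = ((Lset \ Gset).ncard : ℝ) * ((q + 1) * q : ℕ) := by push_cast; ring
        _ ≤ (ε * Lset.ncard) * ((q + 1) * q : ℕ) := by
            apply mul_le_mul_of_nonneg_right hbadlines (by positivity)
        _ = ε * ((Lset.ncard * ((q + 1) * q) : ℕ) : ℝ) := by push_cast; ring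
        _ = ε * (N * (N - 1) : ℕ) := by rw [hLN]
    calc (D.ncard : ℝ) ≤ (N : ℝ) + BadP.ncard := by exact_mod_cast h1
      _ ≤ N + ε * (N * (N - 1) : ℕ) := by linarith
  -- cardinality of T
  have hBsub : B ⊆ L2 x ×ˢ L2 x := Set.diff_subset
  have hTeq : T = (L2 x ×ˢ L2 x) \ B := by
    rw [hBdef, Set.diff_diff_cancel_left hTsub]
  have hTcard : T.ncard = (L2 x ×ˢ L2 x).ncard - B.ncard := by
    rw [hTeq, Set.ncard_diff hBsub (Set.toFinite _)]
  have hBle : B.ncard ≤ (L2 x ×ˢ L2 x).ncard := Set.ncard_le_ncard hBsub (Set.toFinite _)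
  -- pass to real numbers
  have hq1N : (1 : ℕ) ≤ q := by omega
  have h1N : (1 : ℕ) ≤ N := by omega
  have hQcast : ((q - 1 : ℕ) : ℝ) = (q : ℝ) - 1 := by
    rw [Nat.cast_sub hq1N]; norm_num
  have hNcast : ((N - 1 : ℕ) : ℝ) = (N : ℝ) - 1 := by
    rw [Nat.cast_sub h1N]; norm_num
  have hcast : (N : ℝ) * ((q : ℝ) - 1) + 1 = (q : ℝ) ^ (n + 1) := by
    have := congrArg (Nat.cast : ℕ → ℝ) hN
    push_cast [Nat.cast_sub hq1N] at this
    linarith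
  have hQ2 : (2 : ℝ) ≤ (q : ℝ) := by exact_mod_cast hq2
  have hN2R : (2 : ℝ) ≤ (N : ℝ) := by exact_mod_cast hN2
  have hprodR : ((L2 x ×ˢ L2 x).ncard : ℝ) = (((N : ℝ) - 1) * ((q : ℝ) - 1)) ^ 2 := by
    rw [hprodcard]
    push_cast [Nat.cast_sub hq1N, Nat.cast_sub h1N]
    ring
  have hprodpos : (0 : ℝ) < (((N : ℝ) - 1) * ((q : ℝ) - 1)) ^ 2 := by
    have : (0:ℝ) < ((N : ℝ) - 1) * ((q : ℝ) - 1) := by nlinarith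
    positivity
  have hBR : (B.ncard : ℝ) ≤ ((N : ℝ) + ε * ((N : ℝ) * ((N : ℝ) - 1)))
      * (((q : ℝ) - 1) * ((q : ℝ) - 1)) := by
    have hNN1 : ((N * (N - 1) : ℕ) : ℝ) = (N : ℝ) * ((N : ℝ) - 1) := by
      push_cast [Nat.cast_sub h1N]; ring
    calc (B.ncard : ℝ) ≤ ((D.ncard * ((q - 1) * (q - 1)) : ℕ) : ℝ) := by exact_mod_cast hBD
      _ = (D.ncard : ℝ) * (((q : ℝ) - 1) * ((q : ℝ) - 1)) := by
          push_cast [Nat.cast_sub hq1N]; ring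
      _ ≤ ((N : ℝ) + ε * ((N : ℝ) * ((N : ℝ) - 1))) * (((q : ℝ) - 1) * ((q : ℝ) - 1)) := by
          apply mul_le_mul_of_nonneg_right _ (by nlinarith)
          rw [hNN1] at hDcard
          exact hDcard
  -- numeric endgame
  set Q : ℝ := (q : ℝ) with hQdef
  set NR : ℝ := (N : ℝ) with hNRdef
  have hE1 : Q ^ (n + 1) - 1 = NR * (Q - 1) := by rw [hQdef, hNRdef]; linarith
  have hEQ : Q ^ (n + 1) - Q = (NR - 1) * (Q - 1) := by rw [hQdef, hNRdef]; nlinarith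
  set c : ℝ := (ε + (Q - 1) / (Q ^ (n + 1) - 1)) *
      (((Q ^ (n + 1) - Q) / (Q ^ (n + 1) - 1)) ^ 2)⁻¹ with hcdef
  have hNR0 : (0:ℝ) < NR := by linarith
  have hNR1 : (0:ℝ) < NR - 1 := by linarith
  have hQ1 : (0:ℝ) < Q - 1 := by linarith
  have hcval : c * ((NR - 1) * (Q - 1)) ^ 2 = ε * NR ^ 2 * (Q - 1) ^ 2 + NR * (Q - 1) ^ 2 := by
    rw [hcdef, hE1, hEQ]
    field_simp
  have hkey : ((NR + ε * (NR * (NR - 1))) * ((Q - 1) * (Q - 1))) ≤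
      c * ((NR - 1) * (Q - 1)) ^ 2 := by
    rw [hcval]
    nlinarith [mul_nonneg hε.le (mul_nonneg hNR0.le (sq_nonneg (Q - 1)))]
  -- conclude
  rw [ratio]
  have hTcR : (T.ncard : ℝ) = ((L2 x ×ˢ L2 x).ncard : ℝ) - (B.ncard : ℝ) := by
    rw [hTcard, Nat.cast_sub hBle]
  rw [hTcR, hprodR]
  rw [le_div_iff₀ hprodpos]
  have hfinal : (B.ncard : ℝ) ≤ c * ((NR - 1) * (Q - 1)) ^ 2 := le_trans hBR hkey
  nlinarith [hfinal, hprodpos]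

theorem ratio_ij_good
    {𝔽 : Type*} [Field 𝔽] [Fintype 𝔽] (q : ℕ) (hq : Fintype.card 𝔽 = q)
    {V₁ V₂ : Type*} [AddCommGroup V₁] [Module 𝔽 V₁] [AddCommGroup V₂] [Module 𝔽 V₂]
    (n : ℕ) (hn : 3 < n)
    (hV₁ : Module.finrank 𝔽 V₁ = n + 1) (hV₂ : Module.finrank 𝔽 V₂ = n + 1)
    (f : Projectivization 𝔽 V₁ → Projectivization 𝔽 V₂) (hf : Function.Injective f)
    (ε : ℝ) (hε : 0 < ε)
    (hlines : 1 - ε ≤ ratio {L | IsLine 𝔽 L} {L | IsLine 𝔽 L ∧ IsLine 𝔽 (f '' L)})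
    (x : Projectivization 𝔽 V₁) (i j : ℕ) (hi : i = 1 ∨ i = 2) (hj : j = 3 ∨ j = 4) :
    1 - (ε + ((q : ℝ) - 1) / ((q : ℝ) ^ (n + 1) - 1)) *
        ((((q : ℝ) ^ (n + 1) - q) / ((q : ℝ) ^ (n + 1) - 1)) ^ 2)⁻¹ ≤
      ratio (L2 x ×ˢ L2 x)
        {p | p.1 ∈ L2 x ∧ p.2 ∈ L2 x ∧
          (if i = 1 then p.1.2.1 else p.1.2.2) ≠ (if j = 3 then p.2.2.1 else p.2.2.2) ∧
          IsLine 𝔽 (Sp (if i = 1 then p.1.2.1 else p.1.2.2)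
            (if j = 3 then p.2.2.1 else p.2.2.2)) ∧
          IsLine 𝔽 (f '' Sp (if i = 1 then p.1.2.1 else p.1.2.2)
            (if j = 3 then p.2.2.1 else p.2.2.2))} := by
  haveI : FiniteDimensional 𝔽 V₁ := FiniteDimensional.of_finrank_pos (by omega)
  have h1 : ∀ t ∈ L2 x, t.2.1 ≠ x := fun t ht => ht.2.2.2.2.1
  have h2 : ∀ t ∈ L2 x, t.2.2 ≠ x := fun t ht => ht.2.2.2.2.2.1
  have hf1 : ∀ y : Projectivization 𝔽 V₁, y ≠ x →
      {t | t ∈ L2 x ∧ t.2.1 = y}.ncard = q - 1 := fun y hy => by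
    rw [ncard_fiber1 x y hy, hq]
  have hf2 : ∀ y : Projectivization 𝔽 V₁, y ≠ x →
      {t | t ∈ L2 x ∧ t.2.2 = y}.ncard = q - 1 := fun y hy => by
    rw [ncard_fiber2 x y hy, hq]
  rcases hi with rfl | rfl <;> rcases hj with rfl | rfl <;>
    simp only [show ((1:ℕ) = 1) = True by simp, show ((3:ℕ) = 3) = True by simp,
      show ((2:ℕ) = 1) = False by simp, show ((4:ℕ) = 3) = False by simp,
      if_true, if_false]
  · exact main_aux q hq n hn hV₁ f ε hε hlines x
      (fun t => t.2.1) (fun t => t.2.1) h1 h1 hf1 hf1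
  · exact main_aux q hq n hn hV₁ f ε hε hlines x
      (fun t => t.2.1) (fun t => t.2.2) h1 h2 hf1 hf2
  · exact main_aux q hq n hn hV₁ f ε hε hlines x
      (fun t => t.2.2) (fun t => t.2.1) h2 h1 hf2 hf1
  · exact main_aux q hq n hn hV₁ f ε hε hlines x
      (fun t => t.2.2) (fun t => t.2.2) h2 h2 hf2 hf2
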